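/- Let EE(K, M) = K(1 − (K/S)·(Kq + M/(α−1))γ/(M − Kpγ))·L/(C₀ + C₁K + D₀M + D₁MK), with q = 4/(α−2)² + 1/(α−1) + 2/(α−2), p = 1 + 2/(α−2), L = log₂(1+γ), and parameters S, γ, C₀, C₁, D₀, D₁ > 0, α > 2. Then for fixed M, EE(·, M) is quasi-concave in K on the feasible set {K > 0 : M > Kpγ and the numerator is positive}. -/

import Mathlib

open Set

lemma affine_helper {s : Set ℝ} {f : ℝ → ℝ} (hf : ConvexOn ℝ s f) (a d e : ℝ) (he : 0 ≤ e) :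
    ConcaveOn ℝ s (fun x => a * x + d - e * f x) := by
  refine ⟨hf.1, fun x hx y hy u v hu hv huv => ?_⟩
  have h := hf.2 hx hy hu hv huv
  simp only [smul_eq_mul] at *
  have h2 := mul_le_mul_of_nonneg_left h he
  have h3 : u*(a*x+d-e*f x) + v*(a*y+d-e*f y)
      = a*(u*x+v*y) + (u+v)*d - e*(u*f x + v*f y) := by ring
  rw [h3, huv, one_mul]
  linarith

lemma aux_convex (M c : ℝ) (hc : 0 < c) (n : ℕ) :
    ConvexOn ℝ (Set.Ioo (0:ℝ) (M/c)) (fun K => K^n * (M - c*K)⁻¹) := by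
  have hTc : Convex ℝ (Ioo (0:ℝ) (M/c)) := convex_Ioo _ _
  have hpos : ∀ x ∈ Ioo (0:ℝ) (M/c), 0 < M - c*x := by
    intro x hx
    have h := (lt_div_iff₀ hc).mp hx.2
    have h2 : c*x = x*c := mul_comm c x
    linarith
  have hpow : ConvexOn ℝ (Ioo (0:ℝ) (M/c)) (fun K => K^n) :=
    (convexOn_pow n).subset (fun x hx => le_of_lt hx.1) hTc
  have hinv0 : ConvexOn ℝ (Ioi (0:ℝ)) (fun x:ℝ => x⁻¹) := by
    simpa using (convexOn_zpow (-1) : ConvexOn ℝ (Ioi 0) fun x : ℝ => x ^ (-1:ℤ))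
  have hw : ConvexOn ℝ (Ioo (0:ℝ) (M/c)) (fun K => (M - c*K)⁻¹) := by
    have h2 := hinv0.comp_affineMap (AffineMap.lineMap (M:ℝ) (M - c))
    have hsub : Ioo (0:ℝ) (M/c) ⊆ (AffineMap.lineMap (M:ℝ) (M-c)) ⁻¹' Ioi 0 := by
      intro x hx
      have h := hpos x hx
      simp only [Set.mem_preimage, AffineMap.lineMap_apply, Set.mem_Ioi, vsub_eq_sub,
        vadd_eq_add, smul_eq_mul]
      nlinarith
    have h3 := h2.subset hsub hTc
    simp only [Function.comp_def] at h3
    have heq : (fun x => ((AffineMap.lineMap (M:ℝ) (M-c) : ℝ →ᵃ[ℝ] ℝ) x)⁻¹)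
        = (fun K:ℝ => (M - c*K)⁻¹) := by
      funext x
      simp only [AffineMap.lineMap_apply, vsub_eq_sub, vadd_eq_add, smul_eq_mul]
      congr 1; ring
    rwa [heq] at h3
  have hmono : MonovaryOn (fun K:ℝ => K^n) (fun K:ℝ => (M - c*K)⁻¹) (Ioo 0 (M/c)) := by
    intro i hi j hj hij
    have hi' := hpos i hi
    have hj' := hpos j hj
    have hij2 : M - c*j < M - c*i := by
      by_contra hcon
      push_neg at hcon
      exact absurd hij (not_lt.mpr (inv_anti₀ hi' hcon))
    have hle : i ≤ j := by nlinarith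
    exact pow_le_pow_left₀ (le_of_lt hi.1) hle n
  exact hpow.mul hw (fun x hx => pow_nonneg (le_of_lt hx.1) n)
    (fun x hx => inv_nonneg.mpr (le_of_lt (hpos x hx))) hmono

set_option maxHeartbeats 2000000 in
theorem ee_quasiconcave_in_K
    (M S γ C₀ C₁ D₀ D₁ α L : ℝ) (hM : 0 < M) (hS : 0 < S) (hγ : 0 < γ)
    (hC₀ : 0 < C₀) (hC₁ : 0 < C₁) (hD₀ : 0 < D₀) (hD₁ : 0 < D₁) (hα : 2 < α)
    (q p : ℝ)
    (hq : q = 4 / (α - 2) ^ 2 + 1 / (α - 1) + 2 / (α - 2))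
    (hp : p = 1 + 2 / (α - 2))
    (hL : L = Real.logb 2 (1 + γ)) :
    QuasiconcaveOn ℝ
      {K : ℝ | 0 < K ∧ K * p * γ < M ∧
        0 < 1 - (K / S) * (K * q + M / (α - 1)) * γ / (M - K * p * γ)}
      (fun K : ℝ =>
        K * (1 - (K / S) * (K * q + M / (α - 1)) * γ / (M - K * p * γ)) * L
          / (C₀ + C₁ * K + D₀ * M + D₁ * M * K)) := by
  have hα1 : (0:ℝ) < α - 1 := by linarith
  have hα2 : (0:ℝ) < α - 2 := by linarith
  have hq0 : 0 < q := by
    rw [hq]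
    have h1 : 0 < 4 / (α-2)^2 := div_pos (by norm_num) (pow_pos hα2 2)
    have h2 : 0 < 1 / (α-1) := div_pos one_pos hα1
    have h3 : 0 < 2 / (α-2) := div_pos (by norm_num) hα2
    linarith
  have hp0 : 0 < p := by
    rw [hp]
    have h3 : 0 < 2 / (α-2) := div_pos (by norm_num) hα2
    linarith
  have hc0 : 0 < p * γ := mul_pos hp0 hγ
  have hL0 : 0 ≤ L := hL ▸ Real.logb_nonneg one_lt_two (by linarith)
  have hb0 : 0 < M / (α - 1) := div_pos hM hα1
  have hTc : Convex ℝ (Ioo (0:ℝ) (M/(p*γ))) := convex_Ioo _ _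
  have hmemT : ∀ x : ℝ, x ∈ Ioo (0:ℝ) (M/(p*γ)) ↔ (0 < x ∧ x*p*γ < M) := by
    intro x
    rw [Set.mem_Ioo, lt_div_iff₀ hc0]
    constructor <;> rintro ⟨h1, h2⟩ <;> exact ⟨h1, by nlinarith⟩
  -- convexity building blocks
  have hu3 := aux_convex M (p*γ) hc0 3
  have hu2 := aux_convex M (p*γ) hc0 2
  have hu1 := aux_convex M (p*γ) hc0 1
  have hu : ConvexOn ℝ (Ioo (0:ℝ) (M/(p*γ)))
      (fun K => q*(K^3*(M-p*γ*K)⁻¹) + (M/(α-1))*(K^2*(M-p*γ*K)⁻¹)) :=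
    (hu3.smul hq0.le).add (hu2.smul hb0.le)
  have hv : ConvexOn ℝ (Ioo (0:ℝ) (M/(p*γ)))
      (fun K => q*(K^2*(M-p*γ*K)⁻¹) + (M/(α-1))*(K^1*(M-p*γ*K)⁻¹)) :=
    (hu2.smul hq0.le).add (hu1.smul hb0.le)
  -- the feasible set in normal form
  have hN := (affine_helper hv 0 1 (γ/S) (div_nonneg hγ.le hS.le)).convex_gt 0
  have hsset : {K : ℝ | 0 < K ∧ K * p * γ < M ∧
        0 < 1 - (K / S) * (K * q + M / (α - 1)) * γ / (M - K * p * γ)}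
      = {x ∈ Ioo (0:ℝ) (M/(p*γ)) | 0 < 0*x + 1 -
          (γ/S)*(q*(x^2*(M-p*γ*x)⁻¹) + (M/(α-1))*(x^1*(M-p*γ*x)⁻¹))} := by
    ext x
    simp only [Set.mem_setOf_eq, Set.mem_sep_iff, hmemT]
    constructor
    · rintro ⟨h1, h2, h3⟩
      have hd : M - x*p*γ ≠ 0 := by linarith
      have hd2 : M - p*γ*x ≠ 0 := by intro h; apply hd; linarith [mul_comm x (p*γ)]; 
      refine ⟨⟨h1, h2⟩, ?_⟩
      have heq : 1 - (x / S) * (x * q + M / (α - 1)) * γ / (M - x * p * γ)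
          = 0*x + 1 - (γ/S)*(q*(x^2*(M-p*γ*x)⁻¹) + (M/(α-1))*(x^1*(M-p*γ*x)⁻¹)) := by
        field_simp
        ring
      rwa [heq] at h3
    · rintro ⟨⟨h1, h2⟩, h3⟩
      have hd : M - x*p*γ ≠ 0 := by linarith
      have hd2 : M - p*γ*x ≠ 0 := by intro h; apply hd; linarith [mul_comm x (p*γ)]
      refine ⟨h1, h2, ?_⟩
      have heq : 1 - (x / S) * (x * q + M / (α - 1)) * γ / (M - x * p * γ)
          = 0*x + 1 - (γ/S)*(q*(x^2*(M-p*γ*x)⁻¹) + (M/(α-1))*(x^1*(M-p*γ*x)⁻¹)) := by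
        field_simp
        ring
      rwa [heq]
  intro r
  set s0 : Set ℝ := {x ∈ Ioo (0:ℝ) (M/(p*γ)) | 0 < 0*x + 1 -
      (γ/S)*(q*(x^2*(M-p*γ*x)⁻¹) + (M/(α-1))*(x^1*(M-p*γ*x)⁻¹))} with hs0
  have hs0conv : Convex ℝ s0 := hN
  have hs0sub : s0 ⊆ Ioo (0:ℝ) (M/(p*γ)) := fun x hx => hx.1
  have hcomb : ConcaveOn ℝ s0 (fun x => (L - r*(C₁+D₁*M))*x + (-(r*(C₀+D₀*M))) -
      (L*γ/S)*(q*(x^3*(M-p*γ*x)⁻¹) + (M/(α-1))*(x^2*(M-p*γ*x)⁻¹))) :=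
    affine_helper (hu.subset hs0sub hs0conv) _ _ _
      (div_nonneg (mul_nonneg hL0 hγ.le) hS.le)
  have hfinal := hcomb.convex_ge 0
  have hsetfin : {x ∈ {K : ℝ | 0 < K ∧ K * p * γ < M ∧
        0 < 1 - (K / S) * (K * q + M / (α - 1)) * γ / (M - K * p * γ)} |
        r ≤ x * (1 - (x / S) * (x * q + M / (α - 1)) * γ / (M - x * p * γ)) * L
          / (C₀ + C₁ * x + D₀ * M + D₁ * M * x)}
      = {x ∈ s0 | 0 ≤ (L - r*(C₁+D₁*M))*x + (-(r*(C₀+D₀*M))) -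
          (L*γ/S)*(q*(x^3*(M-p*γ*x)⁻¹) + (M/(α-1))*(x^2*(M-p*γ*x)⁻¹))} := by
    ext x
    simp only [Set.mem_sep_iff, ← hsset, Set.mem_setOf_eq]
    constructor
    · rintro ⟨⟨h1, h2, h3⟩, h4⟩
      have hd : M - x*p*γ ≠ 0 := by linarith
      have hd2 : M - p*γ*x ≠ 0 := by intro h; apply hd; linarith [mul_comm x (p*γ)]
      have hg : 0 < C₀ + C₁ * x + D₀ * M + D₁ * M * x := by
        have := mul_pos hC₁ h1
        have := mul_pos (mul_pos hD₁ hM) h1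
        have := mul_pos hD₀ hM
        linarith
      refine ⟨⟨h1, h2, h3⟩, ?_⟩
      rw [le_div_iff₀ hg] at h4
      have hnum : x * (1 - (x / S) * (x * q + M / (α - 1)) * γ / (M - x * p * γ)) * L
          = L*x - (L*γ/S)*(q*(x^3*(M-p*γ*x)⁻¹) + (M/(α-1))*(x^2*(M-p*γ*x)⁻¹)) := by
        field_simp
      rw [hnum] at h4
      nlinarith [h4]
    · rintro ⟨⟨h1, h2, h3⟩, h4⟩
      have hd : M - x*p*γ ≠ 0 := by linarith
      have hd2 : M - p*γ*x ≠ 0 := by intro h; apply hd; linarith [mul_comm x (p*γ)]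
      have hg : 0 < C₀ + C₁ * x + D₀ * M + D₁ * M * x := by
        have := mul_pos hC₁ h1
        have := mul_pos (mul_pos hD₁ hM) h1
        have := mul_pos hD₀ hM
        linarith
      refine ⟨⟨h1, h2, h3⟩, ?_⟩
      rw [le_div_iff₀ hg]
      have hnum : x * (1 - (x / S) * (x * q + M / (α - 1)) * γ / (M - x * p * γ)) * L
          = L*x - (L*γ/S)*(q*(x^3*(M-p*γ*x)⁻¹) + (M/(α-1))*(x^2*(M-p*γ*x)⁻¹)) := by
        field_simp
      rw [hnum]
      nlinarith [h4]
  rw [hsetfin]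
  exact hfinal
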